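/- For the function g₁ : ℝ → ℝ ∪ {+∞} defined by g₁(0) = 0, g₁(x) = −1/x for 0 < x ≤ 1, and g₁(x) = +∞ otherwise, the (1,1,ℝ)-strong subdifferential of g₁ at 0 equals (−∞, −1/2]. -/
import Mathlib


open RealInnerProductSpace Set Filter Topology

/-- The `(β, γ, K)`-strong subdifferential of `h : ℝ → EReal` at `x`. -/
def strongSubdiff (h : ℝ → EReal) (K : Set ℝ) (β γ : ℝ) (x : ℝ) : Set ℝ :=
  {ξ | ∀ y ∈ K, ∀ l ∈ Icc (0:ℝ) 1,
    h x + (((l / β) * (ξ * (y - x))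
      + (l / 2) * (γ - l / β - l * γ) * ‖y - x‖ ^ 2 : ℝ) : EReal)
      ≤ max (h y) (h x)}

/-- `g₁(0) = 0`, `g₁(x) = −1/x` for `0 < x ≤ 1`, `g₁(x) = +∞` otherwise. -/
noncomputable def g₁ : ℝ → EReal := fun x =>
  if x = 0 then 0 else if 0 < x ∧ x ≤ 1 then ((-1 / x : ℝ) : EReal) else ⊤

theorem strongSubdiff_g₁_eq_Iic :
    strongSubdiff g₁ Set.univ 1 1 0 = Set.Iic (-(1/2) : ℝ) := by
  have hg0 : g₁ 0 = 0 := by simp [g₁]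
  ext ξ
  simp only [strongSubdiff, mem_setOf_eq, mem_Iic, mem_univ, forall_const]
  constructor
  · intro h
    have key : ∀ l : ℝ, 0 < l → l ≤ 1 → ξ ≤ l - 1/2 := by
      intro l hl0 hl1
      have h1 := h 1 l ⟨hl0.le, hl1⟩
      have hg1 : g₁ 1 = ((-1 : ℝ) : EReal) := by norm_num [g₁]
      rw [hg0, hg1] at h1
      have hmax : max ((-1 : ℝ) : EReal) (0 : EReal) = ((0 : ℝ) : EReal) := by
        rw [max_eq_right]
        · simp
        · exact_mod_cast (by norm_num : (-1 : ℝ) ≤ 0)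
      rw [hmax, zero_add] at h1
      have h2 : (l / 1 * (ξ * (1 - 0)) + l / 2 * (1 - l / 1 - l * 1) * ‖(1:ℝ) - 0‖ ^ 2 : ℝ)
          ≤ (0 : ℝ) := by exact_mod_cast h1
      simp only [div_one, sub_zero, mul_one, norm_one, one_pow] at h2
      nlinarith
    by_contra hc
    push_neg at hc
    rcases le_or_gt ((ξ + 1/2)/2) 1 with hle | hgt
    · have := key ((ξ + 1/2)/2) (by linarith) hle
      linarith
    · have := key 1 one_pos le_rfl
      linarith
  · intro hξ y l hl
    rw [hg0, zero_add]
    by_cases hy0 : y = 0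
    · subst hy0
      simp
    · by_cases hy : 0 < y ∧ y ≤ 1
      · have hgy : g₁ y = ((-1 / y : ℝ) : EReal) := by simp [g₁, hy0, hy]
        rw [hgy]
        have hmax : max ((-1 / y : ℝ) : EReal) (0 : EReal) = ((0 : ℝ) : EReal) := by
          rw [max_eq_right]
          · simp
          · have : (-1 / y : ℝ) ≤ 0 := div_nonpos_of_nonpos_of_nonneg (by norm_num) hy.1.le
            exact_mod_cast this
        rw [hmax]
        have : (l / 1 * (ξ * (y - 0)) + l / 2 * (1 - l / 1 - l * 1) * ‖y - 0‖ ^ 2 : ℝ)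
            ≤ (0 : ℝ) := by
          simp only [div_one, sub_zero, mul_one, Real.norm_eq_abs, sq_abs]
          nlinarith [hl.1, hl.2, hy.1, hy.2, mul_nonneg hl.1 hy.1.le,
            mul_nonneg (mul_nonneg hl.1 hy.1.le) hy.1.le]
        exact_mod_cast this
      · have hgy : g₁ y = ⊤ := by simp [g₁, hy0, hy]
        rw [hgy]
        exact le_trans le_top (le_max_left _ _)
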